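/- Let V, g, φ, ξ, η, A, D be as in the context, suppose Aξ = αξ for some real number α (the Hopf case) and that A satisfies the Maeda relations for α. If A_F(φX, Y) = φ(A_F(X, Y)) for all X, Y ∈ D, then α ≠ 0 and every unit vector X ∈ D with AX = λX for some λ ∈ ℝ satisfies λ = α or λ = −2/α. (Theorem 3, Hopf case.) -/

import Mathlib

open scoped InnerProductSpace

/-- The Cho operator `F_X` for `X` in the maximal holomorphic distribution `D`
(for such `X` the `k`-th Cho operator `F^{(k)}_X Y = g(φ(AX),Y)ξ − η(Y)φ(AX) − k·η(X)·φY`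
does not depend on `k`): `F_X Y = g(φ(AX), Y)·ξ − η(Y)·φ(AX)`. -/
noncomputable def choF {V : Type*} [NormedAddCommGroup V] [InnerProductSpace ℝ V]
    (φ A : V →ₗ[ℝ] V) (ξ : V) (X Y : V) : V :=
  ⟪φ (A X), Y⟫_ℝ • ξ - ⟪Y, ξ⟫_ℝ • φ (A X)

/-- `A_F(X, Y) = F_X (A Y) − A (F_X Y)` for `X ∈ D`. -/
noncomputable def AF {V : Type*} [NormedAddCommGroup V] [InnerProductSpace ℝ V]
    (φ A : V →ₗ[ℝ] V) (ξ : V) (X Y : V) : V :=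
  choF φ A ξ X (A Y) - A (choF φ A ξ X Y)

theorem thm3_hopf {V : Type*} [NormedAddCommGroup V] [InnerProductSpace ℝ V]
    [FiniteDimensional ℝ V] (hdim : 5 ≤ Module.finrank ℝ V)
    (φ : V →ₗ[ℝ] V) (ξ : V) (hξ : ‖ξ‖ = 1)
    (hφφ : ∀ X : V, φ (φ X) = -X + ⟪X, ξ⟫_ℝ • ξ)
    (hφg : ∀ X Y : V, ⟪φ X, φ Y⟫_ℝ = ⟪X, Y⟫_ℝ - ⟪X, ξ⟫_ℝ * ⟪Y, ξ⟫_ℝ)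
    (A : V →ₗ[ℝ] V) (hA : ∀ X Y : V, ⟪A X, Y⟫_ℝ = ⟪X, A Y⟫_ℝ)
    (α : ℝ) (hAξ : A ξ = α • ξ)
    (hMaeda : ∀ (X : V) (l : ℝ), ‖X‖ = 1 → ⟪X, ξ⟫_ℝ = 0 → A X = l • X →
      2 * l - α ≠ 0 ∧ A (φ X) = ((α * l + 2) / (2 * l - α)) • φ X)
    (hphi : ∀ X Y : V, ⟪X, ξ⟫_ℝ = 0 → ⟪Y, ξ⟫_ℝ = 0 →
      AF φ A ξ (φ X) Y = φ (AF φ A ξ X Y)) :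
    α ≠ 0 ∧ ∀ (X : V) (l : ℝ), ‖X‖ = 1 → ⟪X, ξ⟫_ℝ = 0 → A X = l • X →
      l = α ∨ l = -2 / α := by
  have hξ0 : ξ ≠ 0 := by intro h; rw [h, norm_zero] at hξ; norm_num at hξ
  have hξξ : ⟪ξ, ξ⟫_ℝ = 1 := by
    rw [real_inner_self_eq_norm_sq, hξ]; norm_num
  have hφξ : φ ξ = 0 := by
    have h := hφg ξ ξ
    rw [hξξ] at h
    have : ⟪φ ξ, φ ξ⟫_ℝ = 0 := by linarith
    exact inner_self_eq_zero.mp this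
  have hηφ : ∀ X : V, ⟪φ X, ξ⟫_ℝ = 0 := by
    intro X
    have h1 := hφg (φ X) (φ X)
    rw [hφφ X] at h1
    have h2 := hφg X X
    have hL : ⟪-X + ⟪X, ξ⟫_ℝ • ξ, -X + ⟪X, ξ⟫_ℝ • ξ⟫_ℝ
        = ⟪X, X⟫_ℝ - ⟪X, ξ⟫_ℝ * ⟪X, ξ⟫_ℝ := by
      simp [inner_add_left, inner_add_right, inner_smul_left, inner_smul_right,
        hξξ, real_inner_comm X ξ, -inner_self_eq_norm_sq_to_K]
      ring
    rw [hL, h2] at h1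
    have : ⟪φ X, ξ⟫_ℝ * ⟪φ X, ξ⟫_ℝ = 0 := by linarith
    exact (mul_self_eq_zero).mp this
  -- A preserves D
  have hAD : ∀ Y : V, ⟪Y, ξ⟫_ℝ = 0 → ⟪A Y, ξ⟫_ℝ = 0 := by
    intro Y hY
    rw [hA, hAξ, inner_smul_right, hY, mul_zero]
  -- key relation from hphi
  have keyrel : ∀ X Y : V, ⟪X, ξ⟫_ℝ = 0 → ⟪Y, ξ⟫_ℝ = 0 →
      ⟪φ (A (φ X)), A Y⟫_ℝ = α * ⟪φ (A (φ X)), Y⟫_ℝ := by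
    intro X Y hX hY
    have h := hphi X Y hX hY
    have hAY : ⟪A Y, ξ⟫_ℝ = 0 := hAD Y hY
    simp only [AF, choF, hY, hAY, hηφ X, zero_smul, sub_zero, map_sub, map_smul,
      hAξ, hφξ, smul_zero] at h
    rw [smul_smul, ← sub_smul] at h
    have := (smul_eq_zero.mp h).resolve_right hξ0
    linarith [this, mul_comm (⟪φ (A (φ X)), Y⟫_ℝ) α]
  -- every eigenvalue of a unit eigenvector in D satisfies (α l + 2)(l - α) = 0
  have key2 : ∀ (X : V) (l : ℝ), ‖X‖ = 1 → ⟪X, ξ⟫_ℝ = 0 → A X = l • X →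
      (α * l + 2) * (l - α) = 0 := by
    intro X l hX hXD hAX
    obtain ⟨hden, hAφ⟩ := hMaeda X l hX hXD hAX
    set μ := (α * l + 2) / (2 * l - α) with hμ
    have hφAφ : φ (A (φ X)) = -(μ • X) := by
      rw [hAφ, map_smul, hφφ, hXD]; simp
    have h := keyrel X X hXD hXD
    rw [hφAφ, hAX] at h
    have hXX : ⟪X, X⟫_ℝ = 1 := by rw [real_inner_self_eq_norm_sq, hX]; norm_num
    simp only [inner_neg_left, inner_smul_left, inner_smul_right, hXX, mul_one,
      RCLike.star_def, conj_trivial] at h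
    have hμeq : μ * (l - α) = 0 := by nlinarith [h]
    have : (α * l + 2) * (l - α) / (2 * l - α) = 0 := by
      rw [← hμeq, hμ]; ring
    exact (div_eq_zero_iff.mp this).resolve_right hden
  -- existence of a unit eigenvector in D
  obtain ⟨X₀, l₀, hX₀, hX₀D, hAX₀⟩ :
      ∃ (X : V) (l : ℝ), ‖X‖ = 1 ∧ ⟪X, ξ⟫_ℝ = 0 ∧ A X = l • X := by
    set K := (ℝ ∙ ξ)ᗮ with hK
    have hAK : ∀ x ∈ K, A x ∈ K := by
      intro x hx
      rw [Submodule.mem_orthogonal_singleton_iff_inner_left] at hx ⊢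
      exact hAD x hx
    have hKrank : 0 < Module.finrank ℝ K := by
      have h1 : Module.finrank ℝ (ℝ ∙ ξ) + Module.finrank ℝ K = Module.finrank ℝ V :=
        Submodule.finrank_add_finrank_orthogonal _
      have h2 : Module.finrank ℝ (ℝ ∙ ξ) = 1 := finrank_span_singleton hξ0
      omega
    haveI : Nontrivial K := Module.nontrivial_of_finrank_pos hKrank
    set B : K →ₗ[ℝ] K := A.restrict hAK with hB
    have hBsym : B.IsSymmetric := by
      intro x y
      exact hA x.val y.val
    obtain ⟨l, hev⟩ : ∃ l : ℝ, Module.End.HasEigenvalue B l :=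
      ⟨_, hBsym.hasEigenvalue_iSup_of_finiteDimensional⟩
    obtain ⟨x, hx⟩ := hev.exists_hasEigenvector
    have hxne : (x : K) ≠ 0 := hx.2
    have hxv : A x.val = l • x.val := by
      have := hx.apply_eq_smul
      have h2 : (B x).val = (l • x).val := by rw [this]
      simpa [hB, LinearMap.restrict_apply] using h2
    have hxvne : (x : V) ≠ 0 := fun h => hxne (Subtype.ext h)
    refine ⟨‖(x : V)‖⁻¹ • x.val, l, ?_, ?_, ?_⟩
    · rw [norm_smul, norm_inv, norm_norm, inv_mul_cancel₀ (norm_ne_zero_iff.mpr hxvne)]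
    · rw [inner_smul_left]
      have : ⟪(x : V), ξ⟫_ℝ = 0 :=
        Submodule.mem_orthogonal_singleton_iff_inner_left.mp x.2
      simp [this]
    · rw [map_smul, hxv, smul_comm]
  have hα : α ≠ 0 := by
    intro hα0
    have h := key2 X₀ l₀ hX₀ hX₀D hAX₀
    have hden := (hMaeda X₀ l₀ hX₀ hX₀D hAX₀).1
    rw [hα0] at h hden
    have : l₀ = 0 := by nlinarith
    rw [this] at hden; norm_num at hden
  refine ⟨hα, fun X l hX hXD hAX => ?_⟩
  have h := key2 X l hX hXD hAX
  rcases mul_eq_zero.mp h with h1 | h2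
  · right; field_simp; linarith
  · left; linarith
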